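/- For every δ > 0 and M > 0 there exist an interaction matrix P (3×3 cyclic with weight γ ∈ (0,1)) and shock conjectures ε^{(1)}, ε^{(2)}, ε^{(3)} ∈ ℝ³ with ‖ε^{(i)} - ε^{(j)}‖₂ ≤ δ for all i,j, such that the game-to-real gap J_i(u°) - J_i(u^{(i)}) > M for every player i. -/

import Mathlib

open Matrix

/-- Cost of player `i` in a scalar-action quadratic network game on `Fin 3`. -/
noncomputable def J3 (P : Matrix (Fin 3) (Fin 3) ℝ) (ε : Fin 3 → ℝ) (i : Fin 3)
    (u : Fin 3 → ℝ) : ℝ :=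
  (1 / 2) * u i ^ 2 - u i * (P.mulVec u i + ε i)

/-- Euclidean norm of a real vector. -/
noncomputable def euclNorm {a : Type*} [Fintype a] (x : a → ℝ) : ℝ :=
  Real.sqrt (∑ k, x k ^ 2)

lemma inv_one_sub_cyclic_half :
    (1 - !![0, 0, (1/2:ℝ); 1/2, 0, 0; 0, 1/2, 0])⁻¹ =
      !![8/7, 2/7, 4/7; 4/7, 8/7, 2/7; 2/7, 4/7, 8/7] := by
  apply Matrix.inv_eq_right_inv
  ext i j
  fin_cases i <;> fin_cases j <;>
    simp [Matrix.mul_apply, Fin.sum_univ_three, Matrix.one_apply] <;> norm_num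

/-- for every `δ > 0` and `M > 0` there are a 3×3 cyclic interaction
matrix with weight `γ ∈ (0,1)` and shock conjectures `ε⁽¹⁾, ε⁽²⁾, ε⁽³⁾` with
`‖ε⁽ⁱ⁾ - ε⁽ʲ⁾‖₂ ≤ δ` for all `i,j`, whose game-to-real gap exceeds `M` for every
player. Here `u⁽ⁱ⁾ = (I-P)⁻¹ ε⁽ⁱ⁾` and `u°ᵢ = u⁽ⁱ⁾ᵢ`. -/
theorem unbounded_gap_from_shock (δ M : ℝ) (hδ : 0 < δ) (hM : 0 < M) :
    ∃ γ ∈ Set.Ioo (0 : ℝ) 1, ∃ ε : Fin 3 → Fin 3 → ℝ,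
      (∀ i j : Fin 3, euclNorm (ε i - ε j) ≤ δ) ∧
      ∀ i : Fin 3,
        M < J3 !![0, 0, γ; γ, 0, 0; 0, γ, 0] (ε i) i
              (fun x => ((1 - !![0, 0, γ; γ, 0, 0; 0, γ, 0])⁻¹.mulVec (ε x)) x)
            - J3 !![0, 0, γ; γ, 0, 0; 0, γ, 0] (ε i) i
              ((1 - !![0, 0, γ; γ, 0, 0; 0, γ, 0])⁻¹.mulVec (ε i)) := by
  refine ⟨1/2, ⟨by norm_num, by norm_num⟩, ?_⟩
  set c : ℝ := 14 * M / (3 * δ) + δ with hc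
  refine ⟨![![-c + δ/2, -c, -c], ![-c, -c + δ/2, -c], ![-c, -c, -c + δ/2]], ?_, ?_⟩
  · intro i j
    fin_cases i <;> fin_cases j <;>
      simp only [euclNorm, Fin.sum_univ_three, Pi.sub_apply, Fin.mk_zero, Fin.mk_one,
        show ((⟨2, by omega⟩ : Fin 3) = 2) from rfl, Matrix.cons_val_zero,
        Matrix.cons_val_one, Matrix.head_cons, Matrix.cons_val_two, Matrix.tail_cons] <;>
      exact le_trans (Real.sqrt_le_sqrt (by nlinarith)) (le_of_eq (Real.sqrt_sq hδ.le))
  · have hc0 : 0 < c := by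
      have : 0 < 14 * M / (3 * δ) := by positivity
      simp only [hc]; linarith
    intro i
    have key : 14 * M / (3 * δ) * δ = 14 * M / 3 := by
      field_simp
    fin_cases i <;>
      · simp only [inv_one_sub_cyclic_half, J3, Matrix.mulVec, dotProduct,
          Fin.sum_univ_three, Fin.isValue, Fin.mk_zero, Fin.mk_one,
          show ((⟨2, by omega⟩ : Fin 3) = 2) from rfl, Matrix.cons_val_zero,
          Matrix.cons_val_one, Matrix.head_cons, Matrix.cons_val_two, Matrix.tail_cons,
          Matrix.of_apply, Matrix.cons_val', Matrix.empty_val', Matrix.cons_val_fin_one,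
          Matrix.head_fin_const]
        nlinarith [sq_nonneg δ, mul_pos hδ hc0, sq_nonneg (c - δ)]
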